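/- Let A be an n×n complex matrix such that every eigenvalue μ ∈ spectrum ℂ A satisfies Re μ ≠ 0, let U be a unitary n×n matrix, let η ∈ {1, −1}, and suppose A = η • (U ⬝ Aᴴ ⬝ Uᴴ). Let F be a spectral sign of A, i.e. F⬝A = A⬝F, F⬝F = 1, and for every eigenvalue μ ∈ spectrum ℂ A and every v ∈ ℂⁿ with ((A − μ•1)^n) *ᵥ v = 0 one has F *ᵥ v = v if Re μ > 0 and F *ᵥ v = −v if Re μ < 0. Then F = η • (U ⬝ Fᴴ ⬝ Uᴴ). -/

import Mathlib

open Matrix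

private lemma pair_shift {n : ℕ} (M : Matrix (Fin n) (Fin n) ℂ) (w v : Fin n → ℂ) :
    star (Mᴴ *ᵥ w) ⬝ᵥ v = star w ⬝ᵥ (M *ᵥ v) := by
  rw [star_mulVec, conjTranspose_conjTranspose, ← dotProduct_mulVec]

/-- Orthogonality of generalized eigenvectors of `A` and `Aᴴ` for non-conjugate eigenvalues. -/
private lemma orth {n : ℕ} (A : Matrix (Fin n) (Fin n) ℂ) {μ lam : ℂ} (hne : lam ≠ star μ) :
    ∀ (k l : ℕ) (v w : Fin n → ℂ), ((A - μ • 1) ^ k) *ᵥ v = 0 →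
      ((Aᴴ - lam • 1) ^ l) *ᵥ w = 0 → star w ⬝ᵥ v = 0 := by
  intro k
  induction k with
  | zero =>
      intro l v w hv _
      simp only [pow_zero, one_mulVec] at hv
      simp [hv]
  | succ k ih =>
      intro l
      induction l with
      | zero =>
          intro v w _ hw
          simp only [pow_zero, one_mulVec] at hw
          simp [hw]
      | succ l ihl =>
          intro v w hv hw
          set B : Matrix (Fin n) (Fin n) ℂ := A - μ • 1 with hB
          set C : Matrix (Fin n) (Fin n) ℂ := Aᴴ - lam • 1 with hC
          have hv' : (B ^ k) *ᵥ (B *ᵥ v) = 0 := by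
            rw [mulVec_mulVec, ← pow_succ]; exact hv
          have hw' : (C ^ l) *ᵥ (C *ᵥ w) = 0 := by
            rw [mulVec_mulVec, ← pow_succ]; exact hw
          have e1 : star w ⬝ᵥ (B *ᵥ v) = 0 := ih (l + 1) (B *ᵥ v) w hv' hw
          have e2 : star (C *ᵥ w) ⬝ᵥ v = 0 := ihl v (C *ᵥ w) hv hw'
          have hCH : C = (A - (star lam) • 1)ᴴ := by
            rw [conjTranspose_sub, conjTranspose_smul, star_star, conjTranspose_one]
          rw [hCH, pair_shift] at e2
          have e1' : star w ⬝ᵥ (A *ᵥ v) - μ * (star w ⬝ᵥ v) = 0 := by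
            have : B *ᵥ v = A *ᵥ v - μ • v := by
              rw [hB, sub_mulVec, smul_mulVec, one_mulVec]
            rw [this, dotProduct_sub, dotProduct_smul, smul_eq_mul] at e1
            exact e1
          have e2' : star w ⬝ᵥ (A *ᵥ v) - star lam * (star w ⬝ᵥ v) = 0 := by
            have : (A - (star lam) • 1) *ᵥ v = A *ᵥ v - (star lam) • v := by
              rw [sub_mulVec, smul_mulVec, one_mulVec]
            rw [this, dotProduct_sub, dotProduct_smul, smul_eq_mul] at e2
            exact e2
          have hμne : μ ≠ star lam := by
            intro h
            exact hne (by rw [h, star_star])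
          have : (μ - star lam) * (star w ⬝ᵥ v) = 0 := by
            have := sub_eq_zero.mpr (e1'.trans e2'.symm)
            ring_nf at this ⊢
            linear_combination e2' - e1'
          rcases mul_eq_zero.mp this with h | h
          · exact absurd (sub_eq_zero.mp h) hμne
          · exact h

/-- Induction principle: any additive predicate holding on all generalized eigenvectors
of `A` (for eigenvalues in the spectrum) holds everywhere. -/
private lemma spanInd {n : ℕ} (A : Matrix (Fin n) (Fin n) ℂ)
    (p : (Fin n → ℂ) → Prop) (h0 : p 0) (hadd : ∀ x y, p x → p y → p (x + y))
    (h : ∀ μ ∈ spectrum ℂ A, ∀ v, ((A - μ • 1) ^ n) *ᵥ v = 0 → p v) :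
    ∀ v, p v := by
  set f : Module.End ℂ (Fin n → ℂ) := Matrix.toLinAlgEquiv' A with hf
  have htop : (⨆ μ : ℂ, f.maxGenEigenspace μ) = ⊤ :=
    Module.End.iSup_maxGenEigenspace_eq_top f
  intro v
  have hv : v ∈ ⨆ μ : ℂ, f.maxGenEigenspace μ := htop ▸ Submodule.mem_top
  refine Submodule.iSup_induction (motive := p) _ hv (fun μ x hx => ?_) h0 hadd
  have hker : ((A - μ • 1) ^ n) *ᵥ x = 0 := by
    have h1 : x ∈ f.genEigenspace μ (Module.finrank ℂ (Fin n → ℂ)) :=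
      Module.End.genEigenspace_le_genEigenspace_finrank f μ ⊤ hx
    rw [Module.finrank_fin_fun, Module.End.mem_genEigenspace_nat, LinearMap.mem_ker] at h1
    have h2 : (Matrix.toLinAlgEquiv' ((A - μ • 1) ^ n)) x = 0 := by
      rw [map_pow, map_sub, _root_.map_smul, _root_.map_one]
      exact h1
    rwa [Matrix.toLinAlgEquiv'_apply] at h2
  by_cases hμ : μ ∈ spectrum ℂ A
  · exact h μ hμ x hker
  · have hu : IsUnit ((algebraMap ℂ (Matrix (Fin n) (Fin n) ℂ)) μ - A) :=
      spectrum.notMem_iff.mp hμ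
    have hu2 : IsUnit (((A - μ • 1 : Matrix (Fin n) (Fin n) ℂ)) ^ n) := by
      refine IsUnit.pow n ?_
      have := hu.neg
      rwa [neg_sub, Algebra.algebraMap_eq_smul_one] at this
    have hx0 : x = 0 := by
      calc x = ((↑hu2.unit⁻¹ * ↑hu2.unit : Matrix (Fin n) (Fin n) ℂ)) *ᵥ x := by
              rw [hu2.unit.inv_mul, one_mulVec]
        _ = (↑hu2.unit⁻¹ : Matrix (Fin n) (Fin n) ℂ) *ᵥ (((A - μ • 1) ^ n) *ᵥ x) := by
              rw [← mulVec_mulVec, IsUnit.unit_spec]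
        _ = 0 := by rw [hker, mulVec_zero]
    rw [hx0]; exact h0

open scoped ComplexOrder in
private lemma Fh_action {n : ℕ} (A F : Matrix (Fin n) (Fin n) ℂ)
    (hA : ∀ μ ∈ spectrum ℂ A, μ.re ≠ 0)
    (hF : ∀ μ ∈ spectrum ℂ A, ∀ v : Fin n → ℂ, ((A - μ • 1) ^ n) *ᵥ v = 0 →
      (0 < μ.re → F *ᵥ v = v) ∧ (μ.re < 0 → F *ᵥ v = -v))
    (lam : ℂ) (w : Fin n → ℂ) (hw : ((Aᴴ - lam • 1) ^ n) *ᵥ w = 0) :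
    Fᴴ *ᵥ w = (if 0 < lam.re then (1 : ℂ) else -1) • w := by
  have hFs : ∀ μ ∈ spectrum ℂ A, ∀ v : Fin n → ℂ, ((A - μ • 1) ^ n) *ᵥ v = 0 →
      F *ᵥ v = (if 0 < μ.re then (1 : ℂ) else -1) • v := by
    intro μ hμ v hv
    rcases lt_or_gt_of_ne (hA μ hμ) with hlt | hgt
    · rw [if_neg (by linarith), (hF μ hμ v hv).2 hlt, neg_one_smul]
    · rw [if_pos hgt, (hF μ hμ v hv).1 hgt, one_smul]
  set sl : ℂ := if 0 < lam.re then (1 : ℂ) else -1 with hsl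
  set u : Fin n → ℂ := Fᴴ *ᵥ w - sl • w with hu
  have hsl_star : star sl = sl := by
    rw [hsl]; split <;> simp
  have key : ∀ v : Fin n → ℂ, star u ⬝ᵥ v = 0 := by
    refine spanInd A _ (by simp) (fun x y hx hy => by rw [dotProduct_add, hx, hy, add_zero]) ?_
    intro μ hμ v hv
    have hFv : F *ᵥ v = (if 0 < μ.re then (1 : ℂ) else -1) • v := hFs μ hμ v hv
    set sm : ℂ := if 0 < μ.re then (1 : ℂ) else -1 with hsm
    have expand : star u ⬝ᵥ v = (sm - sl) * (star w ⬝ᵥ v) := by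
      rw [hu, star_sub, sub_dotProduct, pair_shift, hFv, star_smul, smul_dotProduct,
        dotProduct_smul, hsl_star, smul_eq_mul, smul_eq_mul]
      ring
    by_cases hc : lam = star μ
    · have hre : lam.re = μ.re := by rw [hc]; exact Complex.star_def ▸ Complex.conj_re μ
      have : sm = sl := by rw [hsm, hsl, hre]
      rw [expand, this, sub_self, zero_mul]
    · rw [expand, orth A hc n n v w hv hw, mul_zero]
  have hu0 : u = 0 := dotProduct_star_self_eq_zero.mp (key u)
  have := sub_eq_zero.mp hu0
  rw [hu] at hu0
  exact sub_eq_zero.mp hu0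

theorem stmt_13 {n : ℕ} (A U F : Matrix (Fin n) (Fin n) ℂ) (η : ℂ)
    (hA : ∀ μ ∈ spectrum ℂ A, μ.re ≠ 0)
    (hU : U ∈ Matrix.unitaryGroup (Fin n) ℂ)
    (hη : η = 1 ∨ η = -1)
    (hsym : A = η • (U * Aᴴ * Uᴴ))
    (hFA : F * A = A * F) (hFF : F * F = 1)
    (hF : ∀ μ ∈ spectrum ℂ A, ∀ v : Fin n → ℂ, ((A - μ • 1) ^ n) *ᵥ v = 0 →
      (0 < μ.re → F *ᵥ v = v) ∧ (μ.re < 0 → F *ᵥ v = -v)) :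
    F = η • (U * Fᴴ * Uᴴ) := by
  have hη2 : η * η = 1 := by rcases hη with h | h <;> rw [h] <;> ring
  have hUU : Uᴴ * U = 1 := by
    have := hU.1
    rwa [star_eq_conjTranspose] at this
  have hUU' : U * Uᴴ = 1 := by
    have := hU.2
    rwa [star_eq_conjTranspose] at this
  -- Aᴴ * Uᴴ = η • (Uᴴ * A)
  have hAH : Aᴴ * Uᴴ = η • (Uᴴ * A) := by
    have h1 : η • A = U * Aᴴ * Uᴴ := by
      have := congrArg (fun M : Matrix (Fin n) (Fin n) ℂ => η • M) hsym
      simpa [smul_smul, hη2] using this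
    calc Aᴴ * Uᴴ = (Uᴴ * U) * Aᴴ * Uᴴ := by rw [hUU, one_mul]
      _ = Uᴴ * (U * Aᴴ * Uᴴ) := by noncomm_ring
      _ = Uᴴ * (η • A) := by rw [h1]
      _ = η • (Uᴴ * A) := by rw [mul_smul_comm]
  suffices hFG : ∀ v : Fin n → ℂ, F *ᵥ v = (η • (U * Fᴴ * Uᴴ)) *ᵥ v by
    have : Matrix.toLinAlgEquiv' F = Matrix.toLinAlgEquiv' (η • (U * Fᴴ * Uᴴ)) := by
      apply LinearMap.ext
      intro v
      rw [Matrix.toLinAlgEquiv'_apply, Matrix.toLinAlgEquiv'_apply]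
      exact hFG v
    exact Matrix.toLinAlgEquiv'.injective this
  refine spanInd A _ (by simp) (fun x y hx hy => by rw [mulVec_add, mulVec_add, hx, hy]) ?_
  intro μ hμ v hv
  -- commuting powers through Uᴴ
  have comm : ∀ k : ℕ, ((Aᴴ - (η * μ) • 1) ^ k) * Uᴴ = η ^ k • (Uᴴ * ((A - μ • 1) ^ k)) := by
    intro k
    induction k with
    | zero => simp
    | succ k ih =>
        have hstep : (Aᴴ - (η * μ) • 1) * Uᴴ = η • (Uᴴ * (A - μ • 1)) := by
          rw [sub_mul, hAH, smul_mul_assoc, one_mul, mul_sub, mul_smul_comm, mul_one,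
            smul_sub, smul_smul]
        calc ((Aᴴ - (η * μ) • 1) ^ (k + 1)) * Uᴴ
            = ((Aᴴ - (η * μ) • 1) ^ k) * ((Aᴴ - (η * μ) • 1) * Uᴴ) := by
              rw [← mul_assoc, ← pow_succ]
          _ = ((Aᴴ - (η * μ) • 1) ^ k) * (η • (Uᴴ * (A - μ • 1))) := by rw [hstep]
          _ = η • ((((Aᴴ - (η * μ) • 1) ^ k) * Uᴴ) * (A - μ • 1)) := by
              rw [mul_smul_comm, mul_assoc]
          _ = η • ((η ^ k • (Uᴴ * ((A - μ • 1) ^ k))) * (A - μ • 1)) := by rw [ih]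
          _ = η ^ (k + 1) • (Uᴴ * ((A - μ • 1) ^ (k + 1))) := by
              rw [smul_mul_assoc, smul_smul, ← pow_succ', mul_assoc, ← pow_succ]
  -- Uᴴ *ᵥ v is a generalized eigenvector of Aᴴ with eigenvalue η * μ
  have hgen : ((Aᴴ - (η * μ) • 1) ^ n) *ᵥ (Uᴴ *ᵥ v) = 0 := by
    rw [mulVec_mulVec, comm n, smul_mulVec, ← mulVec_mulVec, hv, mulVec_zero, smul_zero]
  have hFh := Fh_action A F hA hF (η * μ) (Uᴴ *ᵥ v) hgen
  have hFv : F *ᵥ v = (if 0 < μ.re then (1 : ℂ) else -1) • v := by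
    rcases lt_or_gt_of_ne (hA μ hμ) with hlt | hgt
    · rw [if_neg (by linarith), (hF μ hμ v hv).2 hlt, neg_one_smul]
    · rw [if_pos hgt, (hF μ hμ v hv).1 hgt, one_smul]
  have hsign : (if 0 < (η * μ).re then (1 : ℂ) else -1)
      = η * (if 0 < μ.re then (1 : ℂ) else -1) := by
    rcases hη with h | h
    · rw [h, one_mul, one_mul]
    · rw [h]
      have hre : ((-1 : ℂ) * μ).re = -μ.re := by simp
      rcases lt_or_gt_of_ne (hA μ hμ) with hlt | hgt
      · rw [if_pos (by rw [hre]; linarith), if_neg (by linarith)]; norm_num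
      · rw [if_neg (by rw [hre]; linarith), if_pos hgt]; norm_num
  rw [hFv]
  rw [smul_mulVec, ← mulVec_mulVec, ← mulVec_mulVec, hFh, hsign]
  rw [mulVec_smul, mulVec_mulVec, hUU', one_mulVec, smul_smul, ← mul_assoc, hη2, one_mul]
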